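/- More generally, for a linear combination ∑_{i=1}^{t} λ_i A_i of finite sets (arrow diagrams) with n₀ = max_i |A_i|, and any finite set G₀ with a distinguished subset P of size p > n₀: ∑_{Q ⊆ P} (-1)^{p-|Q|} ∑_{i=1}^t λ_i ⟨A_i, (G₀ \ P) ∪ Q⟩ = 0. -/

import Mathlib

lemma aux_alt {C : Type*} [DecidableEq C] (S P : Finset C) (h : S ⊂ P) :
    ∑ Q ∈ P.powerset.filter (fun Q => S ⊆ Q), (-1:ℤ)^(P.card - Q.card) = 0 := by
  have himg : P.powerset.filter (fun Q => S ⊆ Q) = (P \ S).powerset.image (· ∪ S) := by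
    ext Q
    simp only [Finset.mem_filter, Finset.mem_powerset, Finset.mem_image]
    constructor
    · rintro ⟨hQP, hSQ⟩
      exact ⟨Q \ S, Finset.sdiff_subset_sdiff hQP le_rfl,
        by rw [Finset.sdiff_union_self_eq_union, Finset.union_eq_left.mpr hSQ]⟩
    · rintro ⟨R, hR, rfl⟩
      exact ⟨Finset.union_subset (hR.trans Finset.sdiff_subset) h.subset,
        Finset.subset_union_right⟩
  rw [himg, Finset.sum_image]
  · have key : ∀ R ∈ (P \ S).powerset, (-1:ℤ)^(P.card - (R ∪ S).card)
        = (-1:ℤ)^(P \ S).card * (-1:ℤ)^R.card := by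
      intro R hR
      rw [Finset.mem_powerset] at hR
      have hdisj : Disjoint R S := Finset.disjoint_of_subset_left hR Finset.sdiff_disjoint
      rw [Finset.card_union_of_disjoint hdisj]
      have hSP : S.card ≤ P.card := Finset.card_le_card h.subset
      have hRc : R.card ≤ (P \ S).card := Finset.card_le_card hR
      have hc : (P \ S).card = P.card - S.card := Finset.card_sdiff_of_subset h.subset
      have : P.card - (R.card + S.card) = (P \ S).card - R.card := by omega
      rw [this]
      calc (-1:ℤ)^((P \ S).card - R.card)
          = (-1)^((P \ S).card - R.card) * ((-1)^R.card * (-1)^R.card) := by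
            rw [← pow_add, Even.neg_one_pow ⟨R.card, rfl⟩, mul_one]
        _ = (-1)^(P \ S).card * (-1)^R.card := by
            rw [← mul_assoc, ← pow_add, Nat.sub_add_cancel hRc]
    rw [Finset.sum_congr rfl key, ← Finset.mul_sum,
      Finset.sum_powerset_neg_one_pow_card_of_nonempty (Finset.sdiff_nonempty.mpr h.2),
      mul_zero]
  · intro a ha b hb hab
    rw [Finset.mem_coe, Finset.mem_powerset] at ha hb
    have : ∀ X : Finset C, X ⊆ P \ S → (X ∪ S) \ S = X := fun X hX =>
      Finset.union_sdiff_cancel_right (Finset.disjoint_of_subset_left hX Finset.sdiff_disjoint)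
    rw [← this a ha, ← this b hb, show a ∪ S = b ∪ S from hab]

theorem stmt_10 {C : Type*} [DecidableEq C] (t : ℕ) (lam : Fin t → ℤ)
    (A : Fin t → Finset C) (n₀ : ℕ)
    (hmax : ∀ i, (A i).card ≤ n₀) (hattain : ∃ i, (A i).card = n₀)
    (G₀ P : Finset C) (hP : P ⊆ G₀) (p : ℕ) (hp : P.card = p) (hlt : n₀ < p) :
    ∑ Q ∈ P.powerset, (-1 : ℤ) ^ (p - Q.card) *
      ∑ i : Fin t, lam i *
        ∑ D' ∈ ((G₀ \ P) ∪ Q).powerset, (if A i = D' then (1 : ℤ) else 0) = 0 := by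
  have h1 : ∀ Q : Finset C, ∀ i : Fin t,
      (∑ D' ∈ ((G₀ \ P) ∪ Q).powerset, (if A i = D' then (1:ℤ) else 0))
        = if A i ⊆ (G₀ \ P) ∪ Q then 1 else 0 := by
    intro Q i
    rw [Finset.sum_ite_eq]
    simp only [Finset.mem_powerset]
  simp only [h1, Finset.mul_sum]
  rw [Finset.sum_comm]
  refine Finset.sum_eq_zero fun i _ => ?_
  have h2 : ∀ Q ∈ P.powerset,
      (-1:ℤ)^(p - Q.card) * (lam i * (if A i ⊆ (G₀ \ P) ∪ Q then 1 else 0))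
        = lam i * (if A i \ (G₀ \ P) ⊆ Q then (-1:ℤ)^(p - Q.card) else 0) := by
    intro Q _
    have hiff : A i ⊆ (G₀ \ P) ∪ Q ↔ A i \ (G₀ \ P) ⊆ Q := by
      constructor
      · intro h x hx
        rcases Finset.mem_sdiff.mp hx with ⟨hx1, hx2⟩
        rcases Finset.mem_union.mp (h hx1) with h' | h'
        · exact absurd h' hx2
        · exact h'
      · intro h x hx
        by_cases hx2 : x ∈ G₀ \ P
        · exact Finset.mem_union_left _ hx2
        · exact Finset.mem_union_right _ (h (Finset.mem_sdiff.mpr ⟨hx, hx2⟩))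
    rw [eq_comm, if_congr hiff rfl rfl, eq_comm]
    rcases em (A i ⊆ (G₀ \ P) ∪ Q) with h | h <;> simp [h] <;> ring
  rw [Finset.sum_congr rfl h2, ← Finset.mul_sum, ← Finset.sum_filter]
  set S := A i \ (G₀ \ P) with hS
  rcases em (S ⊆ P) with hSP | hSP
  · have hss : S ⊂ P := by
      refine ⟨hSP, fun hc => ?_⟩
      have h3 : P.card ≤ S.card := Finset.card_le_card hc
      have h4 : S.card ≤ (A i).card := Finset.card_le_card Finset.sdiff_subset
      have := hmax i
      omega
    have := aux_alt S P hss
    rw [hp] at this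
    rw [this, mul_zero]
  · have : P.powerset.filter (fun Q => S ⊆ Q) = ∅ := by
      refine Finset.filter_false_of_mem fun Q hQ h => hSP ?_
      exact h.trans (Finset.mem_powerset.mp hQ)
    rw [this, Finset.sum_empty, mul_zero]
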